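/- Let ρ be a density matrix on ℂᵐ and P an orthogonal projector on ℂᵐ, and set δ = 1 − tr(Pρ) (a real number in [0,1]). Then ‖ ρ − PρP ‖₁ ≤ √(δ(4 − 3δ)). -/

import Mathlib

open scoped Matrix ComplexOrder

noncomputable def traceNorm {m n : Type*} [Fintype m] [Fintype n] [DecidableEq n]
    (A : Matrix m n ℂ) : ℝ :=
  ((Matrix.posSemidef_conjTranspose_mul_self A).1.eigenvectorUnitary.1 *
    Matrix.diagonal (((↑) : ℝ → ℂ) ∘ (√·) ∘ (Matrix.posSemidef_conjTranspose_mul_self A).1.eigenvalues) *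
    (star (Matrix.posSemidef_conjTranspose_mul_self A).1.eigenvectorUnitary : Matrix n n ℂ)).trace.re

namespace GentleAux

open Matrix

variable {n : Type*} [Fintype n] [DecidableEq n]

lemma entry_nonneg_of_psd {A : Matrix n n ℂ} (hA : A.PosSemidef) (i : n) :
    0 ≤ (A i i).re := by
  have h := hA.diag_nonneg (i := i)
  exact (Complex.le_def.mp h).1

lemma trace_re_nonneg_of_psd {A : Matrix n n ℂ} (hA : A.PosSemidef) :
    0 ≤ A.trace.re := by
  rw [Matrix.trace, Complex.re_sum]
  exact Finset.sum_nonneg fun i _ => entry_nonneg_of_psd hA i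

lemma trace_mul_re_nonneg_of_psd {A B : Matrix n n ℂ} (hA : A.PosSemidef)
    (hB : B.PosSemidef) : 0 ≤ (A * B).trace.re := by
  open scoped MatrixOrder in
  obtain ⟨C, hC⟩ := CStarAlgebra.nonneg_iff_eq_star_mul_self.mp hB.nonneg
  rw [hC, ← Matrix.mul_assoc, Matrix.trace_mul_cycle]
  exact trace_re_nonneg_of_psd (hA.mul_mul_conjTranspose_same C)

lemma conj_diag_mul {U : Matrix n n ℂ} (hU : star U * U = 1) (f g : n → ℂ) :
    (U * diagonal f * star U) * (U * diagonal g * star U)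
      = U * diagonal (f * g) * star U := by
  simp only [Matrix.mul_assoc]
  rw [← Matrix.mul_assoc (star U) U, hU, Matrix.one_mul,
    ← Matrix.mul_assoc (diagonal f) (diagonal g), diagonal_mul_diagonal]
  rfl

lemma trace_conj_diag {U : Matrix n n ℂ} (hU : star U * U = 1) (f : n → ℂ) :
    (U * diagonal f * star U).trace = ∑ i, f i := by
  rw [Matrix.trace_mul_cycle, hU, Matrix.one_mul, Matrix.trace_diagonal]

lemma herm_conj_diag {U : Matrix n n ℂ} (f : n → ℝ) :
    (U * diagonal (fun i => (f i : ℂ)) * star U).IsHermitian := by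
  have hd : (diagonal fun i => ((f i : ℝ) : ℂ)).IsHermitian := by
    apply isHermitian_diagonal_of_self_adjoint
    funext i
    simp [Complex.star_def, Complex.conj_ofReal]
  have h2 := isHermitian_mul_mul_conjTranspose U hd
  rwa [← Matrix.star_eq_conjTranspose] at h2

lemma psd_conj_diag {U : Matrix n n ℂ} (f : n → ℝ) (hf : ∀ i, 0 ≤ f i) :
    (U * diagonal (fun i => (f i : ℂ)) * star U).PosSemidef := by
  have hd : (diagonal fun i => ((f i : ℝ) : ℂ)).PosSemidef := by
    apply PosSemidef.diagonal
    intro i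
    exact Complex.zero_le_real.mpr (hf i)
  have h2 := hd.mul_mul_conjTranspose_same U
  rwa [← Matrix.star_eq_conjTranspose] at h2

end GentleAux

open Matrix GentleAux

/-- For a density matrix `ρ` and an orthogonal projector `P`, with `δ = 1 − tr(Pρ)`,
one has `‖ρ − PρP‖₁ ≤ √(δ(4 − 3δ))`. -/
theorem traceNorm_state_projector_compression
    {m : ℕ} (ρ : Matrix (Fin m) (Fin m) ℂ) (hρ : ρ.PosSemidef) (hρtr : ρ.trace = 1)
    (P : Matrix (Fin m) (Fin m) ℂ) (hPherm : P.IsHermitian) (hPproj : P * P = P) :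
    traceNorm (ρ - P * ρ * P)
      ≤ Real.sqrt ((1 - ((P * ρ).trace).re) * (4 - 3 * (1 - ((P * ρ).trace).re))) := by
  classical
  set δ : ℝ := 1 - ((P * ρ).trace).re with hδdef
  set X : Matrix (Fin m) (Fin m) ℂ := ρ - P * ρ * P with hXdef
  set Q : Matrix (Fin m) (Fin m) ℂ := 1 - P with hQdef
  -- basic facts about P and Q
  have hPpsd : P.PosSemidef := by
    have h := posSemidef_conjTranspose_mul_self P
    rwa [hPherm.eq, hPproj] at h
  have hQherm : Q.IsHermitian := isHermitian_one.sub hPherm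
  have hQproj : Q * Q = Q := by
    rw [hQdef]
    simp only [Matrix.mul_sub, Matrix.sub_mul, Matrix.one_mul, Matrix.mul_one, hPproj]
    abel
  have hQpsd : Q.PosSemidef := by
    have h := posSemidef_conjTranspose_mul_self Q
    rwa [hQherm.eq, hQproj] at h
  have hPρP : (P * ρ * P).PosSemidef := by
    have h := hρ.mul_mul_conjTranspose_same P
    rwa [hPherm.eq] at h
  have hX : X.IsHermitian := hρ.1.sub hPρP.1
  have htrPρ : (P * ρ).trace = (ρ * P).trace := Matrix.trace_mul_comm P ρ
  have htrρP : ((ρ * P).trace).re = 1 - δ := by rw [← htrPρ, hδdef]; ring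
  have htrρQ : ((ρ * Q).trace).re = δ := by
    rw [hQdef, Matrix.mul_sub, Matrix.mul_one, Matrix.trace_sub, ← htrPρ, hρtr]
    simp [hδdef]
  have hδ0 : 0 ≤ δ := htrρQ ▸ trace_mul_re_nonneg_of_psd hρ hQpsd
  have hδ1 : δ ≤ 1 := by
    have h := trace_mul_re_nonneg_of_psd hρ hPpsd
    rw [htrρP] at h; linarith
  -- spectral decomposition of X
  set U : Matrix (Fin m) (Fin m) ℂ := (hX.eigenvectorUnitary : Matrix (Fin m) (Fin m) ℂ)
    with hUdef
  have hU1 : star U * U = 1 := by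
    simpa [hUdef] using (unitary.mem_iff.mp hX.eigenvectorUnitary.2).1
  set ev : Fin m → ℝ := hX.eigenvalues with hevdef
  set D : (Fin m → ℝ) → Matrix (Fin m) (Fin m) ℂ :=
    fun f => U * diagonal (fun i => ((f i : ℝ) : ℂ)) * star U with hDdef
  have hXD : X = D ev := by
    have h := hX.spectral_theorem
    rw [hDdef]
    rw [Unitary.conjStarAlgAut_apply] at h
    exact h
  have hDmul : ∀ f g : Fin m → ℝ, D f * D g = D (fun i => f i * g i) := by
    intro f g
    rw [hDdef]
    simp only []
    rw [conj_diag_mul hU1]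
    congr 1
    · congr 1
      funext i
      push_cast
      rfl
  have hDtr : ∀ f, (D f).trace = ((∑ i, f i : ℝ) : ℂ) := by
    intro f
    rw [hDdef]
    simp only []
    rw [trace_conj_diag hU1]
    push_cast
    rfl
  -- trace norm of X equals the sum of |eigenvalues|
  have htn : traceNorm X = ∑ i, |ev i| := by
    have hXX : Xᴴ * X = cfc (fun x : ℝ => x * x) X := by
      rw [hX.eq, cfc_mul (fun x : ℝ => x) (fun x : ℝ => x) X,
        cfc_id' ℝ X (ha := hX.isSelfAdjoint)]
    have e1 : traceNorm X = (cfc Real.sqrt (Xᴴ * X)).trace.re := by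
      unfold traceNorm
      rw [(posSemidef_conjTranspose_mul_self X).1.cfc_eq]
      rfl
    rw [e1, hXX, ← cfc_comp Real.sqrt (fun x : ℝ => x * x) X (ha := hX.isSelfAdjoint)]
    have e2 : cfc (Real.sqrt ∘ fun x : ℝ => x * x) X = cfc (fun x : ℝ => |x|) X :=
      cfc_congr (fun x _ => Real.sqrt_mul_self_eq_abs x)
    rw [e2, hX.cfc_eq]
    have := hDtr (fun i => |ev i|)
    exact (congrArg Complex.re this).trans (Complex.ofReal_re _)
  -- the projector onto the negative eigenspace
  set M : Matrix (Fin m) (Fin m) ℂ := D (fun i => if ev i < 0 then 1 else 0) with hMdef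
  have hMherm : M.IsHermitian := by
    rw [hMdef, hDdef]; exact herm_conj_diag _
  have hMM : M * M = M := by
    rw [hMdef, hDmul]
    apply congrArg D
    funext i
    by_cases h : ev i < 0 <;> simp [h]
  have htrMX : ((M * X).trace).re = ∑ i, (if ev i < 0 then 1 else 0) * ev i := by
    rw [hMdef, hXD, hDmul, hDtr, Complex.ofReal_re]
  have hsumev : (X.trace).re = ∑ i, ev i := by
    rw [hXD, hDtr, Complex.ofReal_re]
  have htrX : (X.trace).re = δ := by
    rw [hXdef, Matrix.trace_sub, Matrix.trace_mul_cycle, hPproj, hρtr]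
    simp [hδdef]
  -- trace norm identity
  have hpt : ∀ x : ℝ, |x| = x - 2 * ((if x < 0 then 1 else 0) * x) := by
    intro x
    by_cases h : x < 0
    · rw [abs_of_neg h]; simp [h]; ring
    · rw [abs_of_nonneg (not_lt.mp h)]; simp [h]
  have htn2 : traceNorm X = δ - 2 * ((M * X).trace).re := by
    rw [htn, htrMX, ← htrX, hsumev]
    calc ∑ i, |ev i| = ∑ i, (ev i - 2 * ((if ev i < 0 then 1 else 0) * ev i)) :=
          Finset.sum_congr rfl fun i _ => hpt (ev i)
      _ = (∑ i, ev i) - 2 * (∑ i, (if ev i < 0 then 1 else 0) * ev i) := by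
          rw [Finset.sum_sub_distrib, Finset.mul_sum]
  -- key bound, for every a > 0
  have key : ∀ a : ℝ, 0 < a →
      traceNorm X ≤ δ + 2 * (a * (1 - δ) + ((1 - a) / 2) ^ 2 * δ / a) := by
    intro a ha
    set γ : ℂ := (1 - (a : ℂ)) / 2 with hγdef
    set T : Matrix (Fin m) (Fin m) ℂ := (a : ℂ) • P + Q * M * P with hTdef
    set S : Matrix (Fin m) (Fin m) ℂ := Q * M * Q - γ • Q with hSdef
    have hTc : Tᴴ = (a : ℂ) • P + P * M * Q := by
      rw [hTdef]
      simp only [Matrix.conjTranspose_add, Matrix.conjTranspose_smul,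
        Matrix.conjTranspose_mul, hPherm.eq, hMherm.eq, hQherm.eq,
        Complex.star_def, Complex.conj_ofReal, Matrix.mul_assoc]
    have hSherm : Sᴴ = S := by
      have hγc : star γ = γ := by
        rw [hγdef]
        simp [Complex.star_def, map_div₀, map_sub, Complex.conj_ofReal]
      rw [hSdef]
      simp only [Matrix.conjTranspose_sub, Matrix.conjTranspose_smul,
        Matrix.conjTranspose_mul, hMherm.eq, hQherm.eq, hγc, Matrix.mul_assoc]
    have hP2 : ∀ Z : Matrix (Fin m) (Fin m) ℂ, P * (P * Z) = P * Z := fun Z => by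
      rw [← Matrix.mul_assoc, hPproj]
    have hM2 : ∀ Z : Matrix (Fin m) (Fin m) ℂ, M * (M * Z) = M * Z := fun Z => by
      rw [← Matrix.mul_assoc, hMM]
    have hW : T * Tᴴ + S * S
        = (a : ℂ) • (M - P * M * P) + ((a : ℂ) * a) • P + (γ * γ) • Q := by
      rw [hTc, hTdef, hSdef, hγdef, hQdef]
      simp only [Matrix.sub_mul, Matrix.mul_sub, Matrix.add_mul, Matrix.mul_add,
        smul_mul_assoc, mul_smul_comm, smul_sub, smul_add, sub_smul, smul_smul,
        Matrix.one_mul, Matrix.mul_one, Matrix.mul_assoc, hP2, hM2, hPproj, hMM]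
      module
    have hSS : (S * S).PosSemidef := by
      have h := posSemidef_self_mul_conjTranspose S
      rwa [hSherm] at h
    have hWpsd : (T * Tᴴ + S * S).PosSemidef :=
      (posSemidef_self_mul_conjTranspose T).add hSS
    have h0 := trace_mul_re_nonneg_of_psd hρ hWpsd
    rw [hW] at h0
    have hγγ : γ * γ = ((((1 - a) / 2) ^ 2 : ℝ) : ℂ) := by
      rw [hγdef]; push_cast; ring
    have hαα : ((a : ℂ) * a) = ((a ^ 2 : ℝ) : ℂ) := by push_cast; ring
    rw [hγγ, hαα] at h0
    rw [Matrix.mul_add, Matrix.mul_add, Matrix.trace_add, Matrix.trace_add,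
      mul_smul_comm, mul_smul_comm, mul_smul_comm, Matrix.trace_smul,
      Matrix.trace_smul, Matrix.trace_smul] at h0
    simp only [Complex.add_re, smul_eq_mul, Complex.re_ofReal_mul] at h0
    rw [htrρP, htrρQ] at h0
    have htt : (M * X).trace = (ρ * (M - P * M * P)).trace := by
      rw [hXdef, Matrix.mul_sub, Matrix.mul_sub, Matrix.trace_sub, Matrix.trace_sub,
        Matrix.trace_mul_comm M ρ]
      congr 1
      have e1 : M * (P * ρ * P) = (M * P * ρ) * P := by
        simp only [Matrix.mul_assoc]
      have e2 : ρ * (P * M * P) = (ρ * P) * (M * P) := by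
        simp only [Matrix.mul_assoc]
      rw [e1, e2, Matrix.trace_mul_comm (M * P * ρ) P,
        Matrix.trace_mul_comm (ρ * P) (M * P)]
      simp only [Matrix.mul_assoc]
      rw [Matrix.trace_mul_comm P (M * (P * ρ))]
      simp only [Matrix.mul_assoc]
    rw [htn2]
    have htt' : ((ρ * (M - P * M * P)).trace).re = ((M * X).trace).re := by rw [htt]
    rw [htt'] at h0
    set t : ℝ := ((M * X).trace).re with htdef
    have hr : -t ≤ a * (1 - δ) + ((1 - a) / 2) ^ 2 * δ / a := by
      have hinv : a * (((1 - a) / 2) ^ 2 * δ / a) = ((1 - a) / 2) ^ 2 * δ := by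
        field_simp
      have h2 : a * (-t) ≤ a * (a * (1 - δ) + ((1 - a) / 2) ^ 2 * δ / a) := by
        nlinarith [h0, hinv]
      exact le_of_mul_le_mul_left h2 ha
    linarith
  -- conclude
  rcases eq_or_lt_of_le hδ0 with heq | hpos
  · have h0 : traceNorm X ≤ 0 := by
      apply le_of_forall_gt_imp_ge_of_dense
      intro ε hε
      have hk := key (ε / 2) (by linarith)
      rw [← heq] at hk
      calc traceNorm X
          ≤ 0 + 2 * (ε / 2 * (1 - 0) + ((1 - ε / 2) / 2) ^ 2 * 0 / (ε / 2)) := hk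
        _ = ε := by ring
    calc traceNorm X ≤ 0 := h0
      _ ≤ Real.sqrt (δ * (4 - 3 * δ)) := Real.sqrt_nonneg _
  · have h43 : 0 < 4 - 3 * δ := by linarith
    set a : ℝ := Real.sqrt (δ / (4 - 3 * δ)) with hadef
    have hfrac : 0 < δ / (4 - 3 * δ) := div_pos hpos h43
    have ha : 0 < a := Real.sqrt_pos.mpr hfrac
    have ha2 : a ^ 2 = δ / (4 - 3 * δ) := Real.sq_sqrt hfrac.le
    have ha2' : a ^ 2 * (4 - 3 * δ) = δ := by rw [ha2, div_mul_cancel₀ _ h43.ne']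
    set s : ℝ := Real.sqrt (δ * (4 - 3 * δ)) with hsdef
    have has : a * s = δ := by
      rw [hadef, hsdef, ← Real.sqrt_mul hfrac.le]
      rw [show δ / (4 - 3 * δ) * (δ * (4 - 3 * δ)) = δ ^ 2 by rw [div_mul_eq_mul_div, div_eq_iff h43.ne']; ring]
      exact Real.sqrt_sq hδ0
    have hexpand : δ + 2 * (a * (1 - δ) + ((1 - a) / 2) ^ 2 * δ / a)
        = (a ^ 2 * (4 - 3 * δ) + δ) / (2 * a) := by
      field_simp
      ring
    have heqf : δ + 2 * (a * (1 - δ) + ((1 - a) / 2) ^ 2 * δ / a) = s := by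
      rw [hexpand, ha2']
      rw [show (δ + δ) / (2 * a) = δ / a by ring]
      rw [div_eq_iff ha.ne']
      rw [mul_comm] at has
      exact has.symm
    exact (key a ha).trans (le_of_eq heqf)
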